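/- Let α ∈ (0,1). For R > 0 define λ₁(R) = ∫_ℝ (1 − cos t) |t|^{−2−α} dt − ∫_ℝ (1 + cos t) ( 1 + (2R/|t|)² )^{−(2+α)/2} |t|^{−2−α} dt (both integrals converge absolutely for every R > 0). Then the function R ↦ λ₁(R) is strictly increasing on (0,∞), λ₁(R) → −∞ as R → 0⁺, λ₁(R) → ∫_ℝ (1 − cos t) |t|^{−2−α} dt > 0 as R → +∞, and there exists a unique R > 0 (depending only on α) such that λ₁(R) = 0. -/

import Mathlib

open MeasureTheory Filter Topology Real Set
open scoped ENNReal

section Helpers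

variable {α : ℝ}

private lemma integrable_nice' (hα : 0 < α) {c : ℝ} (hc : 0 < c) :
    Integrable (fun t : ℝ => (t ^ 2 + c) ^ (-(2 + α) / 2)) := by
  have h1 : Integrable (fun t : ℝ => ((1 : ℝ) + t ^ 2) ^ (-(2 + α) / 2)) := by
    have := integrable_rpow_neg_one_add_norm_sq (E := ℝ) (μ := volume) (r := 2 + α)
      (by simp [Module.finrank_self]; linarith)
    simpa [Real.norm_eq_abs, sq_abs] using this
  set m := min 1 c with hm
  have hm0 : 0 < m := lt_min one_pos hc
  have key : ∀ t : ℝ, (t ^ 2 + c) ^ (-(2 + α) / 2) ≤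
      m ^ (-(2 + α) / 2) * ((1 : ℝ) + t ^ 2) ^ (-(2 + α) / 2) := by
    intro t
    have h2 : m * (1 + t ^ 2) ≤ t ^ 2 + c := by
      have h3 : m ≤ c := min_le_right _ _
      have h4 : m ≤ 1 := min_le_left _ _
      nlinarith [sq_nonneg t]
    have h5 : (0:ℝ) < m * (1 + t ^ 2) := by positivity
    calc (t ^ 2 + c) ^ (-(2 + α) / 2) ≤ (m * (1 + t ^ 2)) ^ (-(2 + α) / 2) :=
          Real.rpow_le_rpow_of_nonpos h5 h2 (by linarith)
      _ = m ^ (-(2 + α) / 2) * ((1 : ℝ) + t ^ 2) ^ (-(2 + α) / 2) :=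
          Real.mul_rpow hm0.le (by positivity)
  refine (h1.const_mul (m ^ (-(2 + α) / 2))).mono' ?_ ?_
  · apply Measurable.aestronglyMeasurable
    fun_prop
  · filter_upwards with t
    rw [Real.norm_eq_abs, abs_of_nonneg (by positivity)]
    exact key t

private lemma integrable_of_even' {f : ℝ → ℝ} (heven : ∀ t, f (-t) = f t)
    (h : IntegrableOn f (Ioi 0)) : Integrable f := by
  rw [← integrableOn_univ, ← Iio_union_Ici (a := (0:ℝ)), integrableOn_union,
    integrableOn_Ici_iff_integrableOn_Ioi]
  refine ⟨?_, h⟩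
  rw [← (Measure.measurePreserving_neg (volume : Measure ℝ)).integrableOn_comp_preimage
      (Homeomorph.neg ℝ).measurableEmbedding]
  simpa [Function.comp_def, heven] using h

private lemma integrable_f1 (hα : 0 < α) (hα1 : α < 1) :
    Integrable (fun t : ℝ => (1 - Real.cos t) * |t| ^ (-(2 + α))) := by
  have hmeas : AEStronglyMeasurable (fun t : ℝ => (1 - Real.cos t) * |t| ^ (-(2 + α))) volume := by
    apply Measurable.aestronglyMeasurable; fun_prop
  refine integrable_of_even' (fun t => by simp) ?_
  have hsplit : Ioi (0:ℝ) = Ioc (0:ℝ) 1 ∪ Ioi 1 := by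
    rw [Set.Ioc_union_Ioi_eq_Ioi]; norm_num
  rw [hsplit, integrableOn_union]
  constructor
  · have hint : IntegrableOn (fun t : ℝ => (1/2 : ℝ) * t ^ (-α)) (Ioc 0 1) := by
      have := (intervalIntegral.integrableOn_Ioo_rpow_iff (s := -α) one_pos).mpr (by linarith)
      exact ((this.congr_set_ae Ioo_ae_eq_Ioc.symm).const_mul _)
    refine hint.mono' (hmeas.restrict) ?_
    filter_upwards [ae_restrict_mem measurableSet_Ioc] with t ht
    obtain ⟨ht0, ht1⟩ := ht
    have habs : |t| = t := abs_of_pos ht0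
    rw [Real.norm_eq_abs, abs_of_nonneg (mul_nonneg (by nlinarith [Real.cos_le_one t])
      (Real.rpow_nonneg (abs_nonneg t) _)), habs]
    have h1 : 1 - Real.cos t ≤ t ^ 2 / 2 := by
      have := Real.one_sub_sq_div_two_le_cos (x := t); linarith
    have h2 : t ^ 2 * t ^ (-(2 + α)) = t ^ (-α) := by
      rw [← Real.rpow_natCast t 2, ← Real.rpow_add ht0]
      norm_num
    calc (1 - Real.cos t) * t ^ (-(2 + α)) ≤ (t ^ 2 / 2) * t ^ (-(2 + α)) := by
          apply mul_le_mul_of_nonneg_right h1 (Real.rpow_nonneg ht0.le _)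
      _ = (1/2 : ℝ) * t ^ (-α) := by rw [div_mul_eq_mul_div, h2]; ring
  · have hint : IntegrableOn (fun t : ℝ => (2 : ℝ) * t ^ (-(2 + α))) (Ioi 1) :=
      (integrableOn_Ioi_rpow_of_lt (by linarith) one_pos).const_mul _
    refine hint.mono' (hmeas.restrict) ?_
    filter_upwards [ae_restrict_mem measurableSet_Ioi] with t ht
    have ht0 : (0:ℝ) < t := lt_trans one_pos ht
    have habs : |t| = t := abs_of_pos ht0
    rw [Real.norm_eq_abs, abs_of_nonneg (mul_nonneg (by nlinarith [Real.cos_le_one t])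
      (Real.rpow_nonneg (abs_nonneg t) _)), habs]
    have h1 : 1 - Real.cos t ≤ 2 := by
      have := Real.neg_one_le_cos t; linarith
    exact mul_le_mul_of_nonneg_right h1 (Real.rpow_nonneg ht0.le _)

private lemma eq_nice {R t : ℝ} (ht : t ≠ 0) :
    (1 + Real.cos t) * (1 + (2 * R / |t|) ^ 2) ^ (-(2 + α) / 2) * |t| ^ (-(2 + α)) =
      (1 + Real.cos t) * (t ^ 2 + 4 * R ^ 2) ^ (-(2 + α) / 2) := by
  have habs : (0:ℝ) < |t| := abs_pos.mpr ht
  have h1 : |t| ^ (-(2 + α)) = (t ^ 2) ^ (-(2 + α) / 2) := by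
    rw [← sq_abs, ← Real.rpow_natCast |t| 2, ← Real.rpow_mul (abs_nonneg t)]
    norm_num
    ring_nf
  rw [h1, mul_assoc, ← Real.mul_rpow (by positivity) (by positivity)]
  congr 2
  field_simp
  simp only [sq_abs]
  ring

private lemma ae_eq_nice (α R : ℝ) :
    (fun t : ℝ => (1 + Real.cos t) * (1 + (2 * R / |t|) ^ 2) ^ (-(2 + α) / 2) * |t| ^ (-(2 + α)))
      =ᵐ[volume] fun t : ℝ => (1 + Real.cos t) * (t ^ 2 + 4 * R ^ 2) ^ (-(2 + α) / 2) := by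
  have h0 : ∀ᵐ t : ℝ, t ≠ 0 := by
    rw [ae_iff]
    simp [Real.volume_singleton]
  filter_upwards [h0] with t ht
  exact eq_nice ht

private lemma integrable_F (hα : 0 < α) {R : ℝ} (hR : R ≠ 0) :
    Integrable (fun t : ℝ => (1 + Real.cos t) * (t ^ 2 + 4 * R ^ 2) ^ (-(2 + α) / 2)) := by
  have hc : (0:ℝ) < 4 * R ^ 2 := by positivity
  refine ((integrable_nice' hα hc).const_mul 2).mono' ?_ ?_
  · apply Measurable.aestronglyMeasurable; fun_prop
  · filter_upwards with t
    have hb : (0:ℝ) ≤ (t ^ 2 + 4 * R ^ 2) ^ (-(2 + α) / 2) :=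
      Real.rpow_nonneg (by positivity) _
    have hc1 : (0:ℝ) ≤ 1 + Real.cos t := by nlinarith [Real.neg_one_le_cos t]
    have hc2 : 1 + Real.cos t ≤ 2 := by nlinarith [Real.cos_le_one t]
    rw [Real.norm_eq_abs, abs_of_nonneg (mul_nonneg hc1 hb)]
    nlinarith

private lemma integral_F_strict_mono (hα : 0 < α) {R₁ R₂ : ℝ} (h1 : 0 < R₁) (h12 : R₁ < R₂) :
    (∫ t : ℝ, (1 + Real.cos t) * (t ^ 2 + 4 * R₂ ^ 2) ^ (-(2 + α) / 2)) <
      ∫ t : ℝ, (1 + Real.cos t) * (t ^ 2 + 4 * R₁ ^ 2) ^ (-(2 + α) / 2) := by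
  have hi1 := integrable_F hα (ne_of_gt h1)
  have hi2 := integrable_F hα (ne_of_gt (h1.trans h12))
  have key : (0:ℝ) < ∫ t : ℝ, ((1 + Real.cos t) * (t ^ 2 + 4 * R₁ ^ 2) ^ (-(2 + α) / 2)
      - (1 + Real.cos t) * (t ^ 2 + 4 * R₂ ^ 2) ^ (-(2 + α) / 2)) := by
    have hnonneg : ∀ t : ℝ, 0 ≤ (1 + Real.cos t) * (t ^ 2 + 4 * R₁ ^ 2) ^ (-(2 + α) / 2)
        - (1 + Real.cos t) * (t ^ 2 + 4 * R₂ ^ 2) ^ (-(2 + α) / 2) := by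
      intro t
      have hb : (0:ℝ) < t ^ 2 + 4 * R₁ ^ 2 := by positivity
      have hle : t ^ 2 + 4 * R₁ ^ 2 ≤ t ^ 2 + 4 * R₂ ^ 2 := by nlinarith
      have := Real.rpow_le_rpow_of_nonpos hb hle (by linarith : -(2 + α) / 2 ≤ 0)
      have hc : (0:ℝ) ≤ 1 + Real.cos t := by nlinarith [Real.neg_one_le_cos t]
      nlinarith
    rw [integral_pos_iff_support_of_nonneg_ae (Eventually.of_forall hnonneg) (hi1.sub hi2)]
    have hsub : Ioo (0:ℝ) π ⊆ Function.support fun t =>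
        (1 + Real.cos t) * (t ^ 2 + 4 * R₁ ^ 2) ^ (-(2 + α) / 2)
        - (1 + Real.cos t) * (t ^ 2 + 4 * R₂ ^ 2) ^ (-(2 + α) / 2) := by
      intro t ht
      have hcos : Real.cos π < Real.cos t :=
        Real.cos_lt_cos_of_nonneg_of_le_pi ht.1.le le_rfl ht.2
      rw [Real.cos_pi] at hcos
      have hc : (0:ℝ) < 1 + Real.cos t := by linarith
      have hb : (0:ℝ) < t ^ 2 + 4 * R₁ ^ 2 := by positivity
      have hlt : t ^ 2 + 4 * R₁ ^ 2 < t ^ 2 + 4 * R₂ ^ 2 := by nlinarith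
      have hr := Real.rpow_lt_rpow_of_neg hb hlt (by linarith : -(2 + α) / 2 < 0)
      have : (1 + Real.cos t) * (t ^ 2 + 4 * R₂ ^ 2) ^ (-(2 + α) / 2)
          < (1 + Real.cos t) * (t ^ 2 + 4 * R₁ ^ 2) ^ (-(2 + α) / 2) :=
        mul_lt_mul_of_pos_left hr hc
      simp only [Function.mem_support]
      intro hcontra
      nlinarith
    calc (0:ℝ≥0∞) < volume (Ioo (0:ℝ) π) := by
          rw [Real.volume_Ioo]; simp [ENNReal.ofReal_pos, Real.pi_pos]
      _ ≤ _ := measure_mono hsub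
  rw [integral_sub hi1 hi2] at key
  linarith

private lemma C_pos (hα : 0 < α)
    (hint : Integrable (fun t : ℝ => (1 - Real.cos t) * |t| ^ (-(2 + α)))) :
    (0:ℝ) < ∫ t : ℝ, (1 - Real.cos t) * |t| ^ (-(2 + α)) := by
  have hnonneg : ∀ t : ℝ, 0 ≤ (1 - Real.cos t) * |t| ^ (-(2 + α)) := fun t =>
    mul_nonneg (by nlinarith [Real.cos_le_one t]) (Real.rpow_nonneg (abs_nonneg t) _)
  rw [integral_pos_iff_support_of_nonneg_ae (Eventually.of_forall hnonneg) hint]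
  have hsub : Ioo (0:ℝ) π ⊆ Function.support fun t => (1 - Real.cos t) * |t| ^ (-(2 + α)) := by
    intro t ht
    have hcos : Real.cos t < Real.cos 0 :=
      Real.cos_lt_cos_of_nonneg_of_le_pi le_rfl ht.2.le ht.1
    rw [Real.cos_zero] at hcos
    have habs : (0:ℝ) < |t| := abs_pos.mpr (ne_of_gt ht.1)
    have := Real.rpow_pos_of_pos habs (-(2 + α))
    simp only [Function.mem_support]
    exact ne_of_gt (mul_pos (by linarith) this)
  calc (0:ℝ≥0∞) < volume (Ioo (0:ℝ) π) := by
        rw [Real.volume_Ioo]; simp [ENNReal.ofReal_pos, Real.pi_pos]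
    _ ≤ _ := measure_mono hsub

private lemma g_lower (hα : 0 < α) (hα1 : α < 1) {R : ℝ} (hR0 : 0 < R) (hR1 : R < 1) :
    (5:ℝ) ^ (-(3:ℝ)/2) * (1/R - 1) ≤
      ∫ t : ℝ, (1 + Real.cos t) * (t ^ 2 + 4 * R ^ 2) ^ (-(2 + α) / 2) := by
  have hint := integrable_F hα hR0.ne'
  have hnonneg : ∀ t : ℝ, 0 ≤ (1 + Real.cos t) * (t ^ 2 + 4 * R ^ 2) ^ (-(2 + α) / 2) :=
    fun t => mul_nonneg (by nlinarith [Real.neg_one_le_cos t])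
      (Real.rpow_nonneg (by positivity) _)
  have h1 : (∫ t in Ioc R 1, (1 + Real.cos t) * (t ^ 2 + 4 * R ^ 2) ^ (-(2 + α) / 2)) ≤
      ∫ t : ℝ, (1 + Real.cos t) * (t ^ 2 + 4 * R ^ 2) ^ (-(2 + α) / 2) :=
    setIntegral_le_integral hint (Eventually.of_forall hnonneg)
  have hint1 : IntegrableOn (fun t : ℝ => (5:ℝ) ^ (-(3:ℝ)/2) * t ^ (-2 : ℝ)) (Ioc R 1) := by
    have h0 : (0:ℝ) ∉ Set.uIcc R 1 := by
      rw [Set.mem_uIcc]; push_neg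
      constructor <;> intro h <;> [skip; linarith] <;> linarith
    have := intervalIntegral.intervalIntegrable_rpow (μ := volume) (r := (-2:ℝ)) (a := R)
      (b := 1) (Or.inr h0)
    rw [intervalIntegrable_iff, uIoc_of_le hR1.le] at this
    exact this.const_mul _
  have h2 : (∫ t in Ioc R 1, (5:ℝ) ^ (-(3:ℝ)/2) * t ^ (-2 : ℝ)) ≤
      ∫ t in Ioc R 1, (1 + Real.cos t) * (t ^ 2 + 4 * R ^ 2) ^ (-(2 + α) / 2) := by
    refine setIntegral_mono_on hint1 hint.integrableOn measurableSet_Ioc ?_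
    intro t ht
    obtain ⟨htR, ht1⟩ := ht
    have ht0 : 0 < t := hR0.trans htR
    have hcos : 0 ≤ Real.cos t := by
      apply Real.cos_nonneg_of_mem_Icc
      constructor
      · linarith [Real.pi_pos, ht0.le]
      · nlinarith [Real.pi_gt_three]
    have hc1 : (1:ℝ) ≤ 1 + Real.cos t := by linarith
    have hb : (0:ℝ) < t ^ 2 + 4 * R ^ 2 := by positivity
    have hle : t ^ 2 + 4 * R ^ 2 ≤ 5 * t ^ 2 := by nlinarith
    have hr1 : (5 * t ^ 2 : ℝ) ^ (-(2 + α) / 2) ≤ (t ^ 2 + 4 * R ^ 2) ^ (-(2 + α) / 2) :=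
      Real.rpow_le_rpow_of_nonpos hb hle (by linarith)
    have hsplit : (5 * t ^ 2 : ℝ) ^ (-(2 + α) / 2) =
        (5:ℝ) ^ (-(2 + α) / 2) * t ^ (-(2 + α)) := by
      rw [Real.mul_rpow (by norm_num) (by positivity)]
      congr 1
      rw [← Real.rpow_natCast t 2, ← Real.rpow_mul ht0.le]
      norm_num
      ring_nf
    have h5 : (5:ℝ) ^ (-(3:ℝ)/2) ≤ (5:ℝ) ^ (-(2 + α) / 2) := by
      apply Real.rpow_le_rpow_of_exponent_le (by norm_num)
      linarith
    have htp : t ^ (-2:ℝ) ≤ t ^ (-(2 + α)) := by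
      apply Real.rpow_le_rpow_of_exponent_ge ht0 ht1
      linarith
    have htn : (0:ℝ) ≤ t ^ (-2:ℝ) := Real.rpow_nonneg ht0.le _
    calc (5:ℝ) ^ (-(3:ℝ)/2) * t ^ (-2:ℝ) ≤ (5:ℝ) ^ (-(2 + α) / 2) * t ^ (-(2 + α)) := by
          apply mul_le_mul h5 htp htn (Real.rpow_nonneg (by norm_num) _)
      _ = (5 * t ^ 2 : ℝ) ^ (-(2 + α) / 2) := hsplit.symm
      _ ≤ (t ^ 2 + 4 * R ^ 2) ^ (-(2 + α) / 2) := hr1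
      _ ≤ (1 + Real.cos t) * (t ^ 2 + 4 * R ^ 2) ^ (-(2 + α) / 2) := by
          nlinarith [Real.rpow_nonneg hb.le (-(2 + α) / 2)]
  have h3 : (∫ t in Ioc R 1, (5:ℝ) ^ (-(3:ℝ)/2) * t ^ (-2 : ℝ)) =
      (5:ℝ) ^ (-(3:ℝ)/2) * (1/R - 1) := by
    rw [integral_const_mul]
    congr 1
    rw [← intervalIntegral.integral_of_le hR1.le]
    rw [integral_rpow]
    · norm_num
      rw [Real.rpow_neg_one]
      field_simp
      ring
    · right
      constructor
      · norm_num
      · rw [Set.mem_uIcc]; push_neg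
        constructor <;> intro h <;> [skip; linarith] <;> linarith
  linarith

private lemma g_tendsto_zero (hα : 0 < α) :
    Tendsto (fun R : ℝ => ∫ t : ℝ, (1 + Real.cos t) * (t ^ 2 + 4 * R ^ 2) ^ (-(2 + α) / 2))
      atTop (𝓝 0) := by
  have h0 : (0:ℝ) = ∫ t : ℝ, (0:ℝ) := by simp
  rw [h0]
  apply tendsto_integral_filter_of_dominated_convergence
    (fun t : ℝ => 2 * (t ^ 2 + 4) ^ (-(2 + α) / 2))
  · filter_upwards with R
    apply Measurable.aestronglyMeasurable; fun_prop
  · filter_upwards [eventually_ge_atTop (1:ℝ)] with R hR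
    filter_upwards with t
    have hb : (0:ℝ) < t ^ 2 + 4 := by positivity
    have hle : t ^ 2 + 4 ≤ t ^ 2 + 4 * R ^ 2 := by nlinarith
    have h1 : (t ^ 2 + 4 * R ^ 2) ^ (-(2 + α) / 2) ≤ (t ^ 2 + 4) ^ (-(2 + α) / 2) :=
      Real.rpow_le_rpow_of_nonpos hb hle (by linarith)
    have hbn : (0:ℝ) ≤ (t ^ 2 + 4 * R ^ 2) ^ (-(2 + α) / 2) :=
      Real.rpow_nonneg (by positivity) _
    have hc1 : (0:ℝ) ≤ 1 + Real.cos t := by nlinarith [Real.neg_one_le_cos t]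
    have hc2 : 1 + Real.cos t ≤ 2 := by nlinarith [Real.cos_le_one t]
    rw [Real.norm_eq_abs, abs_of_nonneg (mul_nonneg hc1 hbn)]
    nlinarith
  · exact (integrable_nice' hα (by norm_num : (0:ℝ) < 4)).const_mul 2
  · filter_upwards with t
    have hbase : Tendsto (fun R : ℝ => t ^ 2 + 4 * R ^ 2) atTop atTop := by
      apply tendsto_atTop_add_const_left
      exact (tendsto_pow_atTop (by norm_num : 2 ≠ 0)).const_mul_atTop (by norm_num)
    have hexp : Tendsto (fun x : ℝ => x ^ (-(2 + α) / 2)) atTop (𝓝 0) := by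
      have heq : -(2 + α) / 2 = -((2 + α) / 2) := by ring
      rw [heq]
      exact tendsto_rpow_neg_atTop (by linarith)
    have := (hexp.comp hbase).const_mul (1 + Real.cos t)
    simpa using this

private lemma g_continuousAt (hα : 0 < α) {R₀ : ℝ} (hR₀ : 0 < R₀) :
    ContinuousAt (fun R : ℝ => ∫ t : ℝ, (1 + Real.cos t) * (t ^ 2 + 4 * R ^ 2) ^ (-(2 + α) / 2))
      R₀ := by
  apply continuousAt_of_dominated (bound := fun t : ℝ => 2 * (t ^ 2 + R₀ ^ 2) ^ (-(2 + α) / 2))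
  · filter_upwards with R
    apply Measurable.aestronglyMeasurable; fun_prop
  · filter_upwards [Ioi_mem_nhds (by linarith : R₀ / 2 < R₀)] with R hR
    filter_upwards with t
    have hRhalf : R₀ / 2 < R := hR
    have hb : (0:ℝ) < t ^ 2 + R₀ ^ 2 := by positivity
    have hle : t ^ 2 + R₀ ^ 2 ≤ t ^ 2 + 4 * R ^ 2 := by nlinarith
    have h1 : (t ^ 2 + 4 * R ^ 2) ^ (-(2 + α) / 2) ≤ (t ^ 2 + R₀ ^ 2) ^ (-(2 + α) / 2) :=
      Real.rpow_le_rpow_of_nonpos hb hle (by linarith)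
    have hbn : (0:ℝ) ≤ (t ^ 2 + 4 * R ^ 2) ^ (-(2 + α) / 2) :=
      Real.rpow_nonneg (by positivity) _
    have hc1 : (0:ℝ) ≤ 1 + Real.cos t := by nlinarith [Real.neg_one_le_cos t]
    have hc2 : 1 + Real.cos t ≤ 2 := by nlinarith [Real.cos_le_one t]
    rw [Real.norm_eq_abs, abs_of_nonneg (mul_nonneg hc1 hbn)]
    nlinarith
  · exact (integrable_nice' hα (by positivity : (0:ℝ) < R₀ ^ 2)).const_mul 2
  · filter_upwards with t
    apply ContinuousAt.mul continuousAt_const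
    apply ContinuousAt.rpow_const
    · fun_prop
    · left; positivity

end Helpers

/-- `λ₁(R) = ∫_ℝ (1−cos t)|t|^{−2−α} dt − ∫_ℝ (1+cos t)(1+(2R/|t|)²)^{−(2+α)/2}|t|^{−2−α} dt`. -/
noncomputable def lamOne (α R : ℝ) : ℝ :=
  (∫ t : ℝ, (1 - Real.cos t) * |t| ^ (-(2 + α))) -
    ∫ t : ℝ, (1 + Real.cos t) * (1 + (2 * R / |t|) ^ 2) ^ (-(2 + α) / 2) * |t| ^ (-(2 + α))

/-- **Existence and uniqueness of the width `R` making `λ₁` vanish.** For `α ∈ (0,1)`: both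
integrals defining `λ₁(R)` converge absolutely for every `R > 0`; `R ↦ λ₁(R)` is strictly
increasing on `(0,∞)`; `λ₁(R) → −∞` as `R → 0⁺`; `λ₁(R) → ∫_ℝ (1−cos t)|t|^{−2−α} dt > 0` as
`R → +∞`; and there is a unique `R > 0` with `λ₁(R) = 0`. -/
theorem lambda_one_properties (α : ℝ) (hα : α ∈ Set.Ioo (0:ℝ) 1) :
    Integrable (fun t : ℝ => (1 - Real.cos t) * |t| ^ (-(2 + α))) ∧
    (∀ R : ℝ, 0 < R → Integrable
      (fun t : ℝ => (1 + Real.cos t) * (1 + (2 * R / |t|) ^ 2) ^ (-(2 + α) / 2) * |t| ^ (-(2 + α)))) ∧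
    StrictMonoOn (lamOne α) (Set.Ioi 0) ∧
    Tendsto (lamOne α) (𝓝[>] (0:ℝ)) atBot ∧
    Tendsto (lamOne α) atTop (𝓝 (∫ t : ℝ, (1 - Real.cos t) * |t| ^ (-(2 + α)))) ∧
    0 < ∫ t : ℝ, (1 - Real.cos t) * |t| ^ (-(2 + α)) ∧
    ∃! R : ℝ, 0 < R ∧ lamOne α R = 0 := by
  obtain ⟨hα0, hα1⟩ := hα
  set C := ∫ t : ℝ, (1 - Real.cos t) * |t| ^ (-(2 + α)) with hCdef
  have hintf1 := integrable_f1 hα0 hα1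
  have hC : 0 < C := C_pos hα0 hintf1
  have horig : ∀ R : ℝ, 0 < R → Integrable
      (fun t : ℝ => (1 + Real.cos t) * (1 + (2 * R / |t|) ^ 2) ^ (-(2 + α) / 2)
        * |t| ^ (-(2 + α))) :=
    fun R hR => (integrable_F hα0 hR.ne').congr (ae_eq_nice α R).symm
  have hlam : ∀ R : ℝ, lamOne α R =
      C - ∫ t : ℝ, (1 + Real.cos t) * (t ^ 2 + 4 * R ^ 2) ^ (-(2 + α) / 2) := by
    intro R
    unfold lamOne
    rw [integral_congr_ae (ae_eq_nice α R)]
  have hmono : StrictMonoOn (lamOne α) (Set.Ioi 0) := by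
    intro R₁ h1 R₂ _ h12
    rw [hlam, hlam]
    have := integral_F_strict_mono hα0 (Set.mem_Ioi.mp h1) h12
    linarith
  have hbot : Tendsto (lamOne α) (𝓝[>] (0:ℝ)) atBot := by
    rw [tendsto_atBot]
    intro b
    set P := (5:ℝ) ^ ((3:ℝ)/2) with hPdef
    have hP : 0 < P := Real.rpow_pos_of_pos (by norm_num) _
    have hPinv : (5:ℝ) ^ (-(3:ℝ)/2) = P⁻¹ := by
      rw [hPdef, ← Real.rpow_neg (by norm_num)]
      norm_num
    set A := max (1 + P * (C - b)) 2 with hAdef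
    have hA2 : (2:ℝ) ≤ A := le_max_right _ _
    have hA0 : (0:ℝ) < A := by linarith
    filter_upwards [Ioc_mem_nhdsGT_of_mem (Set.mem_Ico.mpr ⟨le_refl (0:ℝ), (by positivity : (0:ℝ) < A⁻¹)⟩)]
      with R hR
    obtain ⟨hR0, hRA⟩ := hR
    have hR1 : R < 1 := by
      have : A⁻¹ ≤ 2⁻¹ := by
        apply inv_anti₀ (by norm_num) hA2
      calc R ≤ A⁻¹ := hRA
        _ ≤ 2⁻¹ := this
        _ < 1 := by norm_num
    have hg := g_lower hα0 hα1 hR0 hR1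
    rw [hlam]
    have h1R : A ≤ 1/R := by
      rw [le_one_div hA0 hR0, one_div]
      exact hRA
    have e2 : P * (C - b) ≤ A - 1 := by
      have := le_max_left (1 + P * (C - b)) 2
      linarith
    have e4 : C - b ≤ P⁻¹ * (1/R - 1) := by
      calc C - b = P⁻¹ * (P * (C - b)) := by field_simp
        _ ≤ P⁻¹ * (1/R - 1) := by
            apply mul_le_mul_of_nonneg_left _ (inv_nonneg.mpr hP.le)
            linarith
    rw [hPinv] at hg
    linarith
  have htop : Tendsto (lamOne α) atTop (𝓝 C) := by
    have h1 : Tendsto (fun R : ℝ =>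
        C - ∫ t : ℝ, (1 + Real.cos t) * (t ^ 2 + 4 * R ^ 2) ^ (-(2 + α) / 2))
        atTop (𝓝 (C - 0)) := tendsto_const_nhds.sub (g_tendsto_zero hα0)
    rw [sub_zero] at h1
    have heq : lamOne α = fun R : ℝ =>
        C - ∫ t : ℝ, (1 + Real.cos t) * (t ^ 2 + 4 * R ^ 2) ^ (-(2 + α) / 2) := funext hlam
    rw [heq]
    exact h1
  have hcont : ∀ R : ℝ, 0 < R → ContinuousAt (lamOne α) R := by
    intro R hR
    have heq : lamOne α = fun R : ℝ =>
        C - ∫ t : ℝ, (1 + Real.cos t) * (t ^ 2 + 4 * R ^ 2) ^ (-(2 + α) / 2) := funext hlam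
    rw [heq]
    exact continuousAt_const.sub (g_continuousAt hα0 hR)
  -- existence
  have hexa : ∃ a : ℝ, 0 < a ∧ lamOne α a < 0 := by
    have h1 : ∀ᶠ R in 𝓝[>] (0:ℝ), lamOne α R ≤ -1 := hbot.eventually (eventually_le_atBot (-1))
    have h2 : ∀ᶠ R in 𝓝[>] (0:ℝ), R ∈ Set.Ioi (0:ℝ) := eventually_mem_nhdsWithin
    obtain ⟨a, ha1, ha2⟩ := (h1.and h2).exists
    exact ⟨a, ha2, by linarith⟩
  obtain ⟨a, ha0, halt⟩ := hexa
  have hexb : ∃ b : ℝ, a < b ∧ 0 < lamOne α b := by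
    have h1 : ∀ᶠ R in atTop, C/2 < lamOne α R :=
      htop.eventually (eventually_gt_nhds (by linarith : C/2 < C))
    obtain ⟨b, hb1, hb2⟩ := (h1.and (eventually_gt_atTop a)).exists
    exact ⟨b, hb2, by linarith⟩
  obtain ⟨b, hab, hbgt⟩ := hexb
  have hconts : ContinuousOn (lamOne α) (Set.Icc a b) := by
    intro x hx
    exact (hcont x (lt_of_lt_of_le ha0 hx.1)).continuousWithinAt
  have h0mem : (0:ℝ) ∈ Set.Ioo (lamOne α a) (lamOne α b) := ⟨halt, hbgt⟩
  obtain ⟨R, hRmem, hR0⟩ := intermediate_value_Ioo hab.le hconts h0mem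
  have hRpos : 0 < R := ha0.trans hRmem.1
  refine ⟨hintf1, horig, hmono, hbot, htop, hC, R, ⟨hRpos, hR0⟩, ?_⟩
  intro y hy
  exact hmono.injOn (Set.mem_Ioi.mpr hy.1) (Set.mem_Ioi.mpr hRpos) (by rw [hy.2, hR0])
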